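/- arXiv:1705.06336 — 8 statements merged into one kernel-verified Lean document; each statement's English description precedes it below -/
import Mathlib

section
/- Let s ≥ 0, r > 1, let σ ∈ {+1, −1}, set x* = σ √(r − 1) and p = r − (r − 1) − σ s √(r − 1). Then (x*, −x*) is an equilibrium of the asymmetric planar system ẋ = −x − y, ẏ = r y + p x + s x² − x² y, the Jacobian there has trace zero and determinant 2(r−1) + σ s √(r−1), and whenever 2(r−1) + σ s √(r−1) > 0 its eigenvalues are the purely imaginary pair ± i √(2(r−1) + σ s √(r−1)). In particular, the Hopf frequency at P₁ (σ = +1) is ω₁* = √(2(r−1) + s√(r−1)) and at P₂ (σ = −1) it is ω₂* = √(2(r−1) − s√(r−1)). -/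
open Matrix

lemma charpoly_root_fin_two (A : Matrix (Fin 2) (Fin 2) ℂ) (lam : ℂ) :
    A.charpoly.IsRoot lam ↔ lam ^ 2 - A.trace * lam + A.det = 0 := by
  rw [Matrix.charpoly, Matrix.det_fin_two, Matrix.trace_fin_two, Matrix.det_fin_two,
    Polynomial.IsRoot.def]
  simp only [Matrix.charmatrix_apply_eq,
    Matrix.charmatrix_apply_ne _ _ _ (by decide : (0 : Fin 2) ≠ 1),
    Matrix.charmatrix_apply_ne _ _ _ (by decide : (1 : Fin 2) ≠ 0), Polynomial.eval_sub,
    Polynomial.eval_mul, Polynomial.eval_X, Polynomial.eval_C, Polynomial.eval_neg]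
  constructor <;> intro h <;> linear_combination h

/-- Hopf frequencies at the nontrivial equilibria `P₁` (σ = +1) and `P₂`
(σ = −1) of the asymmetric planar system
`ẋ = −x − y, ẏ = r y + p x + s x² − x² y`: with `x* = σ √(r−1)` and
`p = r − (r−1) − σ s √(r−1)`, the point `(x*, −x*)` is an equilibrium, the
Jacobian there has trace zero and determinant `2(r−1) + σ s √(r−1)`, and when
this determinant is positive the eigenvalues are `± i √(2(r−1) + σ s √(r−1))`. -/
theorem jacobian_P1_P2_hopf (r s σ : ℝ) (hs : 0 ≤ s) (hr : 1 < r)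
    (hσ : σ = 1 ∨ σ = -1)
    (xstar p : ℝ)
    (hx : xstar = σ * Real.sqrt (r - 1))
    (hp : p = r - (r - 1) - σ * s * Real.sqrt (r - 1))
    (F : (Fin 2 → ℝ) → (Fin 2 → ℝ))
    (hF : ∀ v : Fin 2 → ℝ,
      F v = ![-(v 0) - v 1, r * v 1 + p * v 0 + s * (v 0) ^ 2 - (v 0) ^ 2 * v 1])
    (M : Matrix (Fin 2) (Fin 2) ℝ)
    (hM : M = !![-1, -1; p + 2 * s * xstar + 2 * xstar ^ 2, r - xstar ^ 2]) :
    F ![xstar, -xstar] = 0 ∧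
    (∀ v : Fin 2 → ℝ, fderiv ℝ F ![xstar, -xstar] v = M.mulVec v) ∧
    M.trace = 0 ∧
    M.det = 2 * (r - 1) + σ * s * Real.sqrt (r - 1) ∧
    (0 < 2 * (r - 1) + σ * s * Real.sqrt (r - 1) →
      ∀ lam : ℂ, (M.map (Complex.ofReal)).charpoly.IsRoot lam ↔
        lam = Complex.I * (Real.sqrt (2 * (r - 1) + σ * s * Real.sqrt (r - 1)) : ℝ) ∨
        lam = -(Complex.I * (Real.sqrt (2 * (r - 1) + σ * s * Real.sqrt (r - 1)) : ℝ))) := by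
  have hr1 : (0:ℝ) ≤ r - 1 := by linarith
  have hq : Real.sqrt (r - 1) ^ 2 = r - 1 := Real.sq_sqrt hr1
  have hσ2 : σ ^ 2 = 1 := by rcases hσ with h | h <;> rw [h] <;> norm_num
  have hx2 : xstar ^ 2 = r - 1 := by rw [hx, mul_pow, hσ2, one_mul, hq]
  have hdetR : M.det = 2 * (r - 1) + σ * s * Real.sqrt (r - 1) := by
    rw [hM, Matrix.det_fin_two_of, hp, hx]
    linear_combination (3 * σ ^ 2) * hq + (3 * (r - 1)) * hσ2
  refine ⟨?_, ?_, ?_, hdetR, ?_⟩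
  · -- equilibrium
    rw [hF]
    funext i
    fin_cases i
    · simp
    · show r * (-xstar) + p * xstar + s * xstar ^ 2 - xstar ^ 2 * (-xstar) = 0
      rw [hp, hx]
      linear_combination (σ ^ 3 * Real.sqrt (r - 1)) * hq +
        (σ * Real.sqrt (r - 1) * (r - 1)) * hσ2
  · -- fderiv
    have hF' : F = fun v : Fin 2 → ℝ =>
        ![-(v 0) - v 1, r * v 1 + p * v 0 + s * (v 0) ^ 2 - (v 0) ^ 2 * v 1] := funext hF
    set a : Fin 2 → ℝ := ![xstar, -xstar] with ha
    let L : (Fin 2 → ℝ) →L[ℝ] (Fin 2 → ℝ) := LinearMap.toContinuousLinearMap M.mulVecLin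
    have h0 : HasFDerivAt (fun v : Fin 2 → ℝ => v 0)
        (ContinuousLinearMap.proj (R := ℝ) (φ := fun _ : Fin 2 => ℝ) 0) a :=
      (ContinuousLinearMap.proj (R := ℝ) (φ := fun _ : Fin 2 => ℝ) 0).hasFDerivAt
    have h1 : HasFDerivAt (fun v : Fin 2 → ℝ => v 1)
        (ContinuousLinearMap.proj (R := ℝ) (φ := fun _ : Fin 2 => ℝ) 1) a :=
      (ContinuousLinearMap.proj (R := ℝ) (φ := fun _ : Fin 2 => ℝ) 1).hasFDerivAt
    have hDF : HasFDerivAt F L a := by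
      rw [hF']
      apply hasFDerivAt_pi''
      intro i
      fin_cases i
      · show HasFDerivAt (fun v : Fin 2 → ℝ => -(v 0) - v 1) _ a
        refine HasFDerivAt.congr_fderiv (h0.neg.sub h1) ?_
        ext v
        simp [L, hM, Matrix.mulVec, dotProduct, Fin.sum_univ_two, ha]
        ring
      · show HasFDerivAt
          (fun v : Fin 2 → ℝ => r * v 1 + p * v 0 + s * (v 0) ^ 2 - (v 0) ^ 2 * v 1) _ a
        have hsq : HasFDerivAt (fun v : Fin 2 → ℝ => (v 0) ^ 2)
            (a 0 • ContinuousLinearMap.proj (R := ℝ) (φ := fun _ : Fin 2 => ℝ) 0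
              + a 0 • ContinuousLinearMap.proj (R := ℝ) (φ := fun _ : Fin 2 => ℝ) 0) a := by
          have h00 := h0.mul h0
          simp only [pow_two]
          exact h00
        have h := (((h1.const_mul r).add (h0.const_mul p)).add
          (hsq.const_mul s)).sub (hsq.mul h1)
        refine HasFDerivAt.congr_fderiv h ?_
        ext v
        simp [L, hM, Matrix.mulVec, dotProduct, Fin.sum_univ_two, ha]
        ring
    intro v
    rw [hDF.fderiv]
    simp [L]
  · rw [hM, Matrix.trace_fin_two_of, hx2]; ring
  · intro hd lam
    have hω : (Real.sqrt (2 * (r - 1) + σ * s * Real.sqrt (r - 1))) ^ 2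
        = 2 * (r - 1) + σ * s * Real.sqrt (r - 1) := Real.sq_sqrt hd.le
    have htrR : M.trace = 0 := by rw [hM, Matrix.trace_fin_two_of, hx2]; ring
    have htr : (M.map Complex.ofReal).trace = 0 := by
      have h : (M.map Complex.ofReal).trace = ((M.trace : ℝ) : ℂ) := by
        rw [Matrix.trace_fin_two, Matrix.trace_fin_two, Matrix.map_apply, Matrix.map_apply,
          Complex.ofReal_add]
      rw [h, htrR, Complex.ofReal_zero]
    have hdet : (M.map Complex.ofReal).det
        = ((2 * (r - 1) + σ * s * Real.sqrt (r - 1) : ℝ) : ℂ) := by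
      rw [Matrix.det_fin_two]
      simp only [Matrix.map_apply]
      norm_cast
      rw [← Matrix.det_fin_two]
      exact_mod_cast hdetR
    rw [charpoly_root_fin_two, htr, hdet]
    have h2 : (Complex.I * ((Real.sqrt (2 * (r - 1) + σ * s * Real.sqrt (r - 1)) : ℝ) : ℂ)) ^ 2
        = -(((2 * (r - 1) + σ * s * Real.sqrt (r - 1) : ℝ) : ℂ)) := by
      rw [mul_pow, Complex.I_sq, ← Complex.ofReal_pow, hω]
      ring
    have key : lam ^ 2 - 0 * lam + ((2 * (r - 1) + σ * s * Real.sqrt (r - 1) : ℝ) : ℂ)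
        = (lam - Complex.I * ((Real.sqrt (2 * (r - 1) + σ * s * Real.sqrt (r - 1)) : ℝ) : ℂ))
          * (lam + Complex.I * ((Real.sqrt (2 * (r - 1) + σ * s * Real.sqrt (r - 1)) : ℝ) : ℂ)) := by
      linear_combination h2
    rw [key, mul_eq_zero, sub_eq_zero, add_eq_zero_iff_eq_neg]
end

section
/- Let s > 0 and (p, r) = (1 + s²/2, 1 + s²/4). Then the point (−s/2, s/2) is an equilibrium of the asymmetric planar system ẋ = −x − y, ẏ = r y + p x + s x² − x² y, and the Jacobian matrix there equals [[−1, −1], [1, 1]], which is nonzero and nilpotent; so 0 is an eigenvalue of algebraic multiplicity two and geometric multiplicity one. Hence Q₁ = (1 + s²/2, 1 + s²/4) is a Bogdanov–Takens point of the equilibrium P₁. -/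
open Matrix Polynomial

/-- Bogdanov–Takens point `Q₁ = (1 + s²/2, 1 + s²/4)`: for the asymmetric
planar system `ẋ = −x − y, ẏ = r y + p x + s x² − x² y` with
`(p, r) = (1 + s²/2, 1 + s²/4)` and `s > 0`, the point `(−s/2, s/2)` is an
equilibrium (it is `P₁`), the Jacobian there equals `[[−1,−1],[1,1]]`, which
is nonzero and nilpotent; its characteristic polynomial is `λ²` and its kernel
is one-dimensional (geometric multiplicity one). -/
theorem BT_point_Q1 (s : ℝ) (hs : 0 < s)
    (p r : ℝ) (hp : p = 1 + s ^ 2 / 2) (hr : r = 1 + s ^ 2 / 4)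
    (F : (Fin 2 → ℝ) → (Fin 2 → ℝ))
    (hF : ∀ v : Fin 2 → ℝ,
      F v = ![-(v 0) - v 1, r * v 1 + p * v 0 + s * (v 0) ^ 2 - (v 0) ^ 2 * v 1])
    (M : Matrix (Fin 2) (Fin 2) ℝ) (hM : M = !![-1, -1; 1, 1]) :
    F ![-s / 2, s / 2] = 0 ∧
    (∀ v : Fin 2 → ℝ, fderiv ℝ F ![-s / 2, s / 2] v = M.mulVec v) ∧
    M ≠ 0 ∧ M ^ 2 = 0 ∧
    M.charpoly = X ^ 2 ∧
    Module.finrank ℝ (LinearMap.ker M.mulVecLin) = 1 := by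
  have key : HasFDerivAt F M.mulVecLin.toContinuousLinearMap ![-s / 2, s / 2] := by
    rw [hasFDerivAt_pi']
    intro i
    set x : Fin 2 → ℝ := ![-s / 2, s / 2] with hx
    have h0 : HasFDerivAt (fun v : Fin 2 → ℝ => v 0)
        ((ContinuousLinearMap.proj 0 : (Fin 2 → ℝ) →L[ℝ] ℝ)) x := hasFDerivAt_apply 0 x
    have h1 : HasFDerivAt (fun v : Fin 2 → ℝ => v 1)
        ((ContinuousLinearMap.proj 1 : (Fin 2 → ℝ) →L[ℝ] ℝ)) x := hasFDerivAt_apply 1 x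
    fin_cases i
    · have : (fun v : Fin 2 → ℝ => F v 0) = fun v => -(v 0) - v 1 := by
        funext v; rw [hF]; simp
      show HasFDerivAt (fun v : Fin 2 → ℝ => F v 0) _ x
      rw [this]
      have := h0.neg.sub h1
      refine this.congr_fderiv ?_
      ext v : 1
      simp [Matrix.mulVecLin, hM, Matrix.mulVec, Fin.sum_univ_two, dotProduct]
      ring
    · have : (fun v : Fin 2 → ℝ => F v 1) =
          fun v => r * v 1 + p * v 0 + s * (v 0 * v 0) - (v 0 * v 0) * v 1 := by
        funext v; rw [hF]; simp; ring
      show HasFDerivAt (fun v : Fin 2 → ℝ => F v 1) _ x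
      rw [this]
      have h := (((h1.const_mul r).add (h0.const_mul p)).add
          ((h0.mul h0).const_mul s)).sub ((h0.mul h0).mul h1)
      refine h.congr_fderiv ?_
      ext v : 1
      simp [Matrix.mulVecLin, hM, Matrix.mulVec, Fin.sum_univ_two, dotProduct, hx, hp, hr]
      ring
  refine ⟨?_, ?_, ?_, ?_, ?_, ?_⟩
  · funext i
    fin_cases i <;> simp [hF, hp, hr] <;> ring
  · intro v
    rw [key.fderiv]
    simp [Matrix.mulVecLin]
  · rw [hM]
    intro h
    have := congrFun (congrFun h 0) 0
    norm_num at this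
  · rw [hM, pow_two]
    ext i j
    fin_cases i <;> fin_cases j <;>
      simp [Matrix.mul_apply, Fin.sum_univ_two]
  · rw [Matrix.charpoly, Matrix.det_fin_two, hM]
    simp [Matrix.charmatrix_apply]
    ring
  · have hker : LinearMap.ker M.mulVecLin = Submodule.span ℝ {![1, -1]} := by
      ext v
      rw [LinearMap.mem_ker, Submodule.mem_span_singleton]
      constructor
      · intro hv
        refine ⟨v 0, ?_⟩
        rw [Matrix.mulVecLin_apply] at hv
        have h0 := congrFun hv 0
        rw [hM] at h0
        simp [Matrix.mulVec, Fin.sum_univ_two, dotProduct] at h0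
        funext i
        fin_cases i <;> simp <;> linarith
      · rintro ⟨a, rfl⟩
        rw [hM]
        funext i
        fin_cases i <;> simp [Matrix.mulVec, Fin.sum_univ_two, dotProduct] <;> ring
    rw [hker, finrank_span_singleton]
    intro h
    have := congrFun h 0
    norm_num at this
end

section
/- Let δ ≥ 0, α = √(2/(9 + 2δ²)), and for each sign σ ∈ {+1, −1} define u_σ(t) = 3σα / (cosh t + σ α δ) and v_σ(t) = −3σα sinh t / (cosh t + σ α δ)². Then (u_σ, v_σ) is defined for all t ∈ ℝ (the denominator never vanishes), satisfies the Hamiltonian system u̇ = v, v̇ = u − δ u² − u³ for all t, lies on the zero level set of H(u,v) = v²/2 − u²/2 + δ u³/3 + u⁴/4 (i.e., H(u_σ(t), v_σ(t)) = 0 for all t), and satisfies (u_σ(t), v_σ(t)) → (0,0) as t → +∞ and as t → −∞. Thus Γ₀⁺ and Γ₀⁻ are a pair of homoclinic orbits to the saddle at the origin. -/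
open Real Filter

/-- The pair of explicit homoclinic orbits `Γ₀^±` to the saddle at the origin
of the Hamiltonian system `u̇ = v, v̇ = u − δ u² − u³` (μ = 1 case):
for `δ ≥ 0`, `α = √(2/(9+2δ²))`, and each sign `σ = ±1`, the curve
`u_σ(t) = 3σα/(cosh t + σαδ)`, `v_σ(t) = −3σα sinh t/(cosh t + σαδ)²` is
globally defined, solves the system, lies in the zero level set of the
Hamiltonian, and converges to the origin as `t → ±∞`. -/
theorem homoclinic_orbits_P0 (δ : ℝ) (hδ : 0 ≤ δ)
    (α : ℝ) (hα : α = Real.sqrt (2 / (9 + 2 * δ ^ 2)))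
    (σ : ℝ) (hσ : σ = 1 ∨ σ = -1)
    (u v : ℝ → ℝ)
    (hu : ∀ t : ℝ, u t = 3 * σ * α / (Real.cosh t + σ * α * δ))
    (hv : ∀ t : ℝ, v t = -(3 * σ * α * Real.sinh t) / (Real.cosh t + σ * α * δ) ^ 2) :
    (∀ t : ℝ, Real.cosh t + σ * α * δ ≠ 0) ∧
    (∀ t : ℝ, HasDerivAt u (v t) t) ∧
    (∀ t : ℝ, HasDerivAt v (u t - δ * (u t) ^ 2 - (u t) ^ 3) t) ∧
    (∀ t : ℝ, (v t) ^ 2 / 2 - (u t) ^ 2 / 2 + δ * (u t) ^ 3 / 3 + (u t) ^ 4 / 4 = 0) ∧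
    Tendsto (fun t => (u t, v t)) atTop (nhds (0, 0)) ∧
    Tendsto (fun t => (u t, v t)) atBot (nhds (0, 0)) := by
  obtain rfl : u = fun t => 3 * σ * α / (Real.cosh t + σ * α * δ) := funext hu
  obtain rfl : v = fun t => -(3 * σ * α * Real.sinh t) / (Real.cosh t + σ * α * δ) ^ 2 :=
    funext hv
  have h9 : (0:ℝ) < 9 + 2 * δ ^ 2 := by positivity
  have hα0 : 0 < α := by rw [hα]; exact Real.sqrt_pos.mpr (by positivity)
  have hkey : α ^ 2 * (9 + 2 * δ ^ 2) = 2 := by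
    rw [hα, Real.sq_sqrt (by positivity)]; field_simp
  have hσsq : σ ^ 2 = 1 := by rcases hσ with rfl | rfl <;> norm_num
  have hσge : -1 ≤ σ := by rcases hσ with rfl | rfl <;> norm_num
  have haδ0 : 0 ≤ α * δ := mul_nonneg hα0.le hδ
  have haδ1 : α * δ < 1 := by nlinarith [sq_nonneg α]
  have hDpos : ∀ t : ℝ, 0 < Real.cosh t + σ * α * δ := by
    intro t
    have h1 := Real.one_le_cosh t
    nlinarith
  have hDne : ∀ t : ℝ, Real.cosh t + σ * α * δ ≠ 0 := fun t => (hDpos t).ne'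
  have hcs : ∀ t : ℝ, Real.cosh t ^ 2 - Real.sinh t ^ 2 = 1 := Real.cosh_sq_sub_sinh_sq
  have hD : ∀ t : ℝ, HasDerivAt (fun t => Real.cosh t + σ * α * δ) (Real.sinh t) t :=
    fun t => (Real.hasDerivAt_cosh t).add_const _
  -- generic limit lemma over any filter along which cosh → ∞
  have hlim : ∀ l : Filter ℝ, Tendsto Real.cosh l atTop →
      Tendsto (fun t => (3 * σ * α / (Real.cosh t + σ * α * δ),
        -(3 * σ * α * Real.sinh t) / (Real.cosh t + σ * α * δ) ^ 2)) l (nhds (0, 0)) := by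
    intro l hcosh
    have hDt : Tendsto (fun t => Real.cosh t + σ * α * δ) l atTop :=
      tendsto_atTop_add_const_right _ _ hcosh
    have hu0 : Tendsto (fun t => 3 * σ * α / (Real.cosh t + σ * α * δ)) l (nhds 0) :=
      tendsto_const_nhds.div_atTop hDt
    have hv0 : Tendsto (fun t => -(3 * σ * α * Real.sinh t) / (Real.cosh t + σ * α * δ) ^ 2)
        l (nhds 0) := by
      apply squeeze_zero_norm (a := fun t =>
        3 * α / (Real.cosh t + σ * α * δ) + 3 * α / (Real.cosh t + σ * α * δ) ^ 2)
      · intro t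
        have hDp := hDpos t
        have hsc : |Real.sinh t| ≤ Real.cosh t := by
          have := hcs t
          have := Real.cosh_pos t
          rw [abs_le]
          constructor <;> nlinarith [abs_nonneg (Real.sinh t), sq_abs (Real.sinh t)]
        have habs : ‖-(3 * σ * α * Real.sinh t) / (Real.cosh t + σ * α * δ) ^ 2‖
            = 3 * α * |Real.sinh t| / (Real.cosh t + σ * α * δ) ^ 2 := by
          rw [Real.norm_eq_abs, abs_div, abs_neg, abs_of_pos (pow_pos hDp 2)]
          congr 1
          rcases hσ with rfl | rfl <;>
            simp [abs_mul, abs_of_pos hα0, abs_of_nonneg (by norm_num : (0:ℝ) ≤ 3)]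
        rw [habs]
        have h1 : Real.cosh t ≤ (Real.cosh t + σ * α * δ) + 1 := by nlinarith
        calc 3 * α * |Real.sinh t| / (Real.cosh t + σ * α * δ) ^ 2
            ≤ 3 * α * ((Real.cosh t + σ * α * δ) + 1) / (Real.cosh t + σ * α * δ) ^ 2 := by
              gcongr
              exact hsc.trans h1
          _ = 3 * α / (Real.cosh t + σ * α * δ) + 3 * α / (Real.cosh t + σ * α * δ) ^ 2 := by
              field_simp
      · have h1 : Tendsto (fun t => 3 * α / (Real.cosh t + σ * α * δ)) l (nhds 0) :=
          tendsto_const_nhds.div_atTop hDt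
        have h2 : Tendsto (fun t => 3 * α / (Real.cosh t + σ * α * δ) ^ 2) l (nhds 0) := by
          apply tendsto_const_nhds.div_atTop
          have := hDt.atTop_mul_atTop₀ hDt
          simpa [pow_two] using this
        simpa using h1.add h2
    exact hu0.prodMk_nhds hv0
  refine ⟨hDne, ?_, ?_, ?_, ?_, ?_⟩
  · -- u' = v
    intro t
    have h := (hasDerivAt_const t (3 * σ * α)).div (hD t) (hDne t)
    refine h.congr_deriv (Eq.symm ?_)
    have hne := hDne t
    field_simp
    ring
  · -- v' = u - δu² - u³
    intro t
    have hN : HasDerivAt (fun t => -(3 * σ * α * Real.sinh t)) (-(3 * σ * α * Real.cosh t)) t :=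
      ((Real.hasDerivAt_sinh t).const_mul (3 * σ * α)).neg
    have hD2 : HasDerivAt (fun t => (Real.cosh t + σ * α * δ) ^ 2)
        (2 * (Real.cosh t + σ * α * δ) ^ 1 * Real.sinh t) t := (hD t).pow 2
    have h := hN.div hD2 (pow_ne_zero 2 (hDne t))
    refine h.congr_deriv (Eq.symm ?_)
    have hne := hDne t
    set c := Real.cosh t with hc
    set s := Real.sinh t with hs
    set D := c + σ * α * δ with hDdef
    have e1 : (-(3 * σ * α * c) * D ^ 2 - -(3 * σ * α * s) * (2 * D ^ 1 * s)) / (D ^ 2) ^ 2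
        = (-(3 * σ * α * c) * D + 6 * σ * α * s ^ 2) / D ^ 3 := by
      field_simp
      ring
    have e2 : 3 * σ * α / D - δ * (3 * σ * α / D) ^ 2 - (3 * σ * α / D) ^ 3
        = (3 * σ * α * D ^ 2 - 9 * δ * σ ^ 2 * α ^ 2 * D - 27 * σ ^ 3 * α ^ 3) / D ^ 3 := by
      field_simp
      ring
    rw [e1, e2]
    congr 1
    have hg1 : c ^ 2 - s ^ 2 = 1 := hcs t
    rw [hDdef]
    linear_combination (6 * σ * α) * hg1 +
      (-27 * σ * α ^ 3 - 6 * σ * α ^ 3 * δ ^ 2) * hσsq + (-3 * σ * α) * hkey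
  · -- Hamiltonian level set
    intro t
    have hne := hDne t
    set c := Real.cosh t with hc
    set s := Real.sinh t with hs
    set D := c + σ * α * δ with hDdef
    have hg1 : c ^ 2 - s ^ 2 = 1 := hcs t
    have hE : 18 * σ ^ 2 * α ^ 2 * s ^ 2 - 18 * σ ^ 2 * α ^ 2 * D ^ 2
        + 36 * δ * σ ^ 3 * α ^ 3 * D + 81 * σ ^ 4 * α ^ 4 = 0 := by
      rw [hDdef]
      linear_combination (-18 * σ ^ 2 * α ^ 2) * hg1 +
        (-18 * α ^ 2 + (18 * α ^ 4 * δ ^ 2 + 81 * α ^ 4) * (σ ^ 2 + 1)) * hσsq +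
        (9 * α ^ 2) * hkey
    have e3 : (-(3 * σ * α * s) / D ^ 2) ^ 2 / 2 - (3 * σ * α / D) ^ 2 / 2
        + δ * (3 * σ * α / D) ^ 3 / 3 + (3 * σ * α / D) ^ 4 / 4
        = (18 * σ ^ 2 * α ^ 2 * s ^ 2 - 18 * σ ^ 2 * α ^ 2 * D ^ 2
           + 36 * δ * σ ^ 3 * α ^ 3 * D + 81 * σ ^ 4 * α ^ 4) / (4 * D ^ 4) := by
      field_simp
      ring
    simp only
    rw [e3, hE, zero_div]
  · -- limit at +∞
    apply hlim
    apply tendsto_atTop_mono (f := fun t => Real.exp t / 2)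
    · intro t
      rw [Real.cosh_eq]
      have := Real.exp_pos (-t)
      linarith
    · exact Real.tendsto_exp_atTop.atTop_div_const (by norm_num)
  · -- limit at -∞
    apply hlim
    apply tendsto_atTop_mono (f := fun t => Real.exp (-t) / 2)
    · intro t
      rw [Real.cosh_eq]
      have := Real.exp_pos t
      linarith
    · exact (Real.tendsto_exp_atTop.comp tendsto_neg_atBot_atTop).atTop_div_const (by norm_num)
end

section
/- Let δ ≥ 0, α = √(2/(9 + 2δ²)), ψ = δ√2/3, φ = √(2δ² + 9)/3, and for σ ∈ {+1, −1} let u_σ(t) = 3σα/(cosh t + σαδ) and v_σ(t) = −3σα sinh t/(cosh t + σαδ)² parametrize the homoclinic orbit Γ₀^σ. Then the Melnikov integral I₂^σ(δ) = ∫_{−∞}^{∞} (u_σ(t) v_σ(t))² dt evaluates to I₂^σ(δ) = 16/15 + (23/3) ψ² + 7 ψ⁴ + 2 ψ φ² (3φ² + 4ψ²) arctan(ψ − σφ). -/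
open Real MeasureTheory Filter

set_option maxHeartbeats 2000000

lemma arctan_hasDerivAt (m t : ℝ) :
    HasDerivAt (fun t : ℝ => Real.arctan (m * Real.sinh t / (Real.cosh t + 1)))
      (m / ((1 + m ^ 2) * Real.cosh t + (1 - m ^ 2))) t := by
  have hch : Real.cosh t + 1 ≠ 0 := by positivity
  have hin : HasDerivAt (fun t : ℝ => m * Real.sinh t / (Real.cosh t + 1))
      ((m * Real.cosh t * (Real.cosh t + 1) - m * Real.sinh t * Real.sinh t) / (Real.cosh t + 1) ^ 2) t := by
    simpa using ((Real.hasDerivAt_sinh t).const_mul m).fun_div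
      ((Real.hasDerivAt_cosh t).add_const 1) hch
  have h := hin.arctan
  convert h using 1
  have hden : (0:ℝ) < (1 + m ^ 2) * Real.cosh t + (1 - m ^ 2) := by
    nlinarith [Real.one_le_cosh t, sq_nonneg m]
  have hw : (0:ℝ) < 1 + (m * Real.sinh t / (Real.cosh t + 1)) ^ 2 := by positivity
  field_simp
  ring_nf
  rw [Real.sinh_sq]
  ring

lemma rat_hasDerivAt (c : ℝ) (hc : c ^ 2 < 1) (t : ℝ) :
    HasDerivAt (fun t : ℝ => Real.sinh t *
        (-(1 - c ^ 2) ^ 4 / 5 + -(c * (1 - c ^ 2) ^ 3) / 20 * (Real.cosh t + c)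
          + (1 / 15 + c ^ 2 / 20) * (1 - c ^ 2) ^ 2 * (Real.cosh t + c) ^ 2
          + (-(29 * c) / 120 - c ^ 3 / 20) * (1 - c ^ 2) * (Real.cosh t + c) ^ 3
          + (2 / 15 + 83 * c ^ 2 / 120 + c ^ 4 / 20) * (Real.cosh t + c) ^ 4)
        / ((1 - c ^ 2) ^ 4 * (Real.cosh t + c) ^ 5))
      (Real.sinh t ^ 2 / (Real.cosh t + c) ^ 6
        + c * (3 + 4 * c ^ 2) / (8 * (1 - c ^ 2) ^ 4 * (Real.cosh t + c))) t := by
  have hDpos : ∀ s : ℝ, (0:ℝ) < Real.cosh s + c := fun s => by nlinarith [Real.one_le_cosh s]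
  have hD : Real.cosh t + c ≠ 0 := (hDpos t).ne'
  have hk : (1 - c ^ 2) ≠ 0 := by nlinarith
  have hDc : HasDerivAt (fun s : ℝ => Real.cosh s + c) (Real.sinh t) t :=
    (Real.hasDerivAt_cosh t).add_const c
  have hpoly : HasDerivAt (fun s : ℝ =>
      -(1 - c ^ 2) ^ 4 / 5 + -(c * (1 - c ^ 2) ^ 3) / 20 * (Real.cosh s + c)
        + (1 / 15 + c ^ 2 / 20) * (1 - c ^ 2) ^ 2 * (Real.cosh s + c) ^ 2
        + (-(29 * c) / 120 - c ^ 3 / 20) * (1 - c ^ 2) * (Real.cosh s + c) ^ 3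
        + (2 / 15 + 83 * c ^ 2 / 120 + c ^ 4 / 20) * (Real.cosh s + c) ^ 4)
      (-(c * (1 - c ^ 2) ^ 3) / 20 * Real.sinh t
        + (1 / 15 + c ^ 2 / 20) * (1 - c ^ 2) ^ 2 * (2 * (Real.cosh t + c) ^ 1 * Real.sinh t)
        + (-(29 * c) / 120 - c ^ 3 / 20) * (1 - c ^ 2) * (3 * (Real.cosh t + c) ^ 2 * Real.sinh t)
        + (2 / 15 + 83 * c ^ 2 / 120 + c ^ 4 / 20) * (4 * (Real.cosh t + c) ^ 3 * Real.sinh t)) t := by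
    exact ((((hDc.const_mul _).const_add _).add ((hDc.pow 2).const_mul _)).add
      ((hDc.pow 3).const_mul _)).add ((hDc.pow 4).const_mul _)
  have hnum := (Real.hasDerivAt_sinh t).mul hpoly
  have hden := (hDc.pow 5).const_mul ((1 - c ^ 2) ^ 4)
  have hdne : (1 - c ^ 2) ^ 4 * (Real.cosh t + c) ^ 5 ≠ 0 := by positivity
  have h := hnum.fun_div hden hdne
  refine h.congr_deriv ?_
  symm
  simp only [Pi.mul_apply, Pi.pow_apply]
  have h8 : (8:ℝ) * (1 - c ^ 2) ^ 4 * (Real.cosh t + c) ≠ 0 := by positivity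
  field_simp
  ring_nf
  rw [Real.sinh_sq]
  ring

lemma exp_neg_tendsto : Tendsto (fun t : ℝ => Real.exp (-t)) atTop (nhds 0) :=
  Real.tendsto_exp_neg_atTop_nhds_zero

lemma frac_tendsto (c : ℝ) (hc : -1 < c) :
    Tendsto (fun t : ℝ => Real.sinh t / (Real.cosh t + c)) atTop (nhds 1) := by
  have key : ∀ t : ℝ, Real.sinh t / (Real.cosh t + c)
      = (1 - Real.exp (-t) ^ 2) / (1 + Real.exp (-t) ^ 2 + 2 * c * Real.exp (-t)) := by
    intro t
    have hD : (0:ℝ) < Real.cosh t + c := by nlinarith [Real.one_le_cosh t]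
    have hE : Real.exp t * Real.exp (-t) = 1 := by
      rw [← Real.exp_add]; simp
    have hden : 1 + Real.exp (-t) ^ 2 + 2 * c * Real.exp (-t) = 2 * Real.exp (-t) * (Real.cosh t + c) := by
      rw [Real.cosh_eq]; linear_combination -hE
    rw [hden, Real.sinh_eq]
    rw [div_eq_div_iff hD.ne' (by positivity)]
    linear_combination (Real.cosh t + c) * hE
  rw [show (1:ℝ) = (1 - 0 ^ 2) / (1 + 0 ^ 2 + 2 * c * 0) by norm_num]
  exact Tendsto.congr (fun t => (key t).symm)
    (Tendsto.div (by simpa using ((exp_neg_tendsto.pow 2).const_sub 1))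
      (by simpa using ((exp_neg_tendsto.pow 2).const_add 1).add ((exp_neg_tendsto.const_mul (2*c))))
      (by norm_num))

lemma inv_tendsto (c : ℝ) (hc : -1 < c) :
    Tendsto (fun t : ℝ => 1 / (Real.cosh t + c)) atTop (nhds 0) := by
  have key : ∀ t : ℝ, 1 / (Real.cosh t + c)
      = 2 * Real.exp (-t) / (1 + Real.exp (-t) ^ 2 + 2 * c * Real.exp (-t)) := by
    intro t
    have hD : (0:ℝ) < Real.cosh t + c := by nlinarith [Real.one_le_cosh t]
    have hE : Real.exp t * Real.exp (-t) = 1 := by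
      rw [← Real.exp_add]; simp
    have hden : 1 + Real.exp (-t) ^ 2 + 2 * c * Real.exp (-t) = 2 * Real.exp (-t) * (Real.cosh t + c) := by
      rw [Real.cosh_eq]; linear_combination -hE
    rw [hden, div_eq_div_iff hD.ne' (by positivity)]
    ring
  rw [show (0:ℝ) = 2 * 0 / (1 + 0 ^ 2 + 2 * c * 0) by norm_num]
  exact Tendsto.congr (fun t => (key t).symm)
    (Tendsto.div (by simpa using exp_neg_tendsto.const_mul 2)
      (by simpa using ((exp_neg_tendsto.pow 2).const_add 1).add ((exp_neg_tendsto.const_mul (2*c))))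
      (by norm_num))

lemma arctan_tendsto (m : ℝ) :
    Tendsto (fun t : ℝ => Real.arctan (m * Real.sinh t / (Real.cosh t + 1))) atTop
      (nhds (Real.arctan m)) := by
  have h1 : Tendsto (fun t : ℝ => m * Real.sinh t / (Real.cosh t + 1)) atTop (nhds m) := by
    have := (frac_tendsto 1 (by norm_num)).const_mul m
    simpa [mul_div_assoc] using this
  exact (Real.continuous_arctan.tendsto m).comp h1

lemma rat_tendsto (c : ℝ) (hc : c ^ 2 < 1) :
    Tendsto (fun t : ℝ => Real.sinh t *
        (-(1 - c ^ 2) ^ 4 / 5 + -(c * (1 - c ^ 2) ^ 3) / 20 * (Real.cosh t + c)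
          + (1 / 15 + c ^ 2 / 20) * (1 - c ^ 2) ^ 2 * (Real.cosh t + c) ^ 2
          + (-(29 * c) / 120 - c ^ 3 / 20) * (1 - c ^ 2) * (Real.cosh t + c) ^ 3
          + (2 / 15 + 83 * c ^ 2 / 120 + c ^ 4 / 20) * (Real.cosh t + c) ^ 4)
        / ((1 - c ^ 2) ^ 4 * (Real.cosh t + c) ^ 5)) atTop
      (nhds ((2 / 15 + 83 * c ^ 2 / 120 + c ^ 4 / 20) / (1 - c ^ 2) ^ 4)) := by
  have hc1 : -1 < c := by nlinarith
  have hk : (1 - c ^ 2) ≠ 0 := by nlinarith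
  have key : ∀ t : ℝ, Real.sinh t *
        (-(1 - c ^ 2) ^ 4 / 5 + -(c * (1 - c ^ 2) ^ 3) / 20 * (Real.cosh t + c)
          + (1 / 15 + c ^ 2 / 20) * (1 - c ^ 2) ^ 2 * (Real.cosh t + c) ^ 2
          + (-(29 * c) / 120 - c ^ 3 / 20) * (1 - c ^ 2) * (Real.cosh t + c) ^ 3
          + (2 / 15 + 83 * c ^ 2 / 120 + c ^ 4 / 20) * (Real.cosh t + c) ^ 4)
        / ((1 - c ^ 2) ^ 4 * (Real.cosh t + c) ^ 5)
      = (Real.sinh t / (Real.cosh t + c)) *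
        ((-(1 - c ^ 2) ^ 4 / 5 * (1 / (Real.cosh t + c)) ^ 4
          + -(c * (1 - c ^ 2) ^ 3) / 20 * (1 / (Real.cosh t + c)) ^ 3
          + (1 / 15 + c ^ 2 / 20) * (1 - c ^ 2) ^ 2 * (1 / (Real.cosh t + c)) ^ 2
          + (-(29 * c) / 120 - c ^ 3 / 20) * (1 - c ^ 2) * (1 / (Real.cosh t + c))
          + (2 / 15 + 83 * c ^ 2 / 120 + c ^ 4 / 20)) / (1 - c ^ 2) ^ 4) := by
    intro t
    have hD : (0:ℝ) < Real.cosh t + c := by nlinarith [Real.one_le_cosh t]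
    field_simp
  have h0 := inv_tendsto c hc1
  have hin : Tendsto (fun t : ℝ =>
      (-(1 - c ^ 2) ^ 4 / 5 * (1 / (Real.cosh t + c)) ^ 4
        + -(c * (1 - c ^ 2) ^ 3) / 20 * (1 / (Real.cosh t + c)) ^ 3
        + (1 / 15 + c ^ 2 / 20) * (1 - c ^ 2) ^ 2 * (1 / (Real.cosh t + c)) ^ 2
        + (-(29 * c) / 120 - c ^ 3 / 20) * (1 - c ^ 2) * (1 / (Real.cosh t + c))
        + (2 / 15 + 83 * c ^ 2 / 120 + c ^ 4 / 20)) / (1 - c ^ 2) ^ 4) atTop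
      (nhds ((-(1 - c ^ 2) ^ 4 / 5 * 0 ^ 4 + -(c * (1 - c ^ 2) ^ 3) / 20 * 0 ^ 3
        + (1 / 15 + c ^ 2 / 20) * (1 - c ^ 2) ^ 2 * 0 ^ 2
        + (-(29 * c) / 120 - c ^ 3 / 20) * (1 - c ^ 2) * 0
        + (2 / 15 + 83 * c ^ 2 / 120 + c ^ 4 / 20)) / (1 - c ^ 2) ^ 4)) := by
    exact Tendsto.div_const (((((((h0.pow 4).const_mul _).add
      ((h0.pow 3).const_mul _)).add ((h0.pow 2).const_mul _)).add
      (h0.const_mul _)).add_const _)) _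
  have h := (frac_tendsto c hc1).mul hin
  rw [show ((2 / 15 + 83 * c ^ 2 / 120 + c ^ 4 / 20) / (1 - c ^ 2) ^ 4 : ℝ)
    = 1 * ((-(1 - c ^ 2) ^ 4 / 5 * 0 ^ 4 + -(c * (1 - c ^ 2) ^ 3) / 20 * 0 ^ 3
        + (1 / 15 + c ^ 2 / 20) * (1 - c ^ 2) ^ 2 * 0 ^ 2
        + (-(29 * c) / 120 - c ^ 3 / 20) * (1 - c ^ 2) * 0
        + (2 / 15 + 83 * c ^ 2 / 120 + c ^ 4 / 20)) / (1 - c ^ 2) ^ 4) by ring]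
  exact Tendsto.congr (fun t => (key t).symm) h

/-- The Melnikov integral `I₂^σ(δ) = ∫ (u_σ v_σ)² dt` along the homoclinic
orbit `Γ₀^σ` of the Hamiltonian system `u̇ = v, v̇ = u − δ u² − u³` evaluates
to `16/15 + (23/3)ψ² + 7ψ⁴ + 2ψφ²(3φ² + 4ψ²) arctan(ψ − σφ)`, where
`ψ = δ√2/3`, `φ = √(2δ²+9)/3`. -/
theorem melnikov_integral_I2 (δ : ℝ) (hδ : 0 ≤ δ)
    (α ψ φ : ℝ)
    (hα : α = Real.sqrt (2 / (9 + 2 * δ ^ 2)))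
    (hψ : ψ = δ * Real.sqrt 2 / 3)
    (hφ : φ = Real.sqrt (2 * δ ^ 2 + 9) / 3)
    (σ : ℝ) (hσ : σ = 1 ∨ σ = -1)
    (u v : ℝ → ℝ)
    (hu : ∀ t : ℝ, u t = 3 * σ * α / (Real.cosh t + σ * α * δ))
    (hv : ∀ t : ℝ, v t = -(3 * σ * α * Real.sinh t) / (Real.cosh t + σ * α * δ) ^ 2) :
    ∫ t : ℝ, (u t * v t) ^ 2
      = 16 / 15 + 23 / 3 * ψ ^ 2 + 7 * ψ ^ 4
        + 2 * ψ * φ ^ 2 * (3 * φ ^ 2 + 4 * ψ ^ 2) * Real.arctan (ψ - σ * φ) := by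
  -- basic facts about the constants
  have h2 : (Real.sqrt 2) ^ 2 = 2 := Real.sq_sqrt (by norm_num)
  have h9 : (Real.sqrt (2 * δ ^ 2 + 9)) ^ 2 = 2 * δ ^ 2 + 9 := Real.sq_sqrt (by positivity)
  have hφpos : (0:ℝ) < φ := by
    rw [hφ]; positivity
  have hφ2 : φ ^ 2 = ψ ^ 2 + 1 := by
    rw [hψ, hφ, div_pow, div_pow, h9, mul_pow, h2]; ring
  have hψ0 : 0 ≤ ψ := by rw [hψ]; positivity
  have hσ2 : σ ^ 2 = 1 := by rcases hσ with h | h <;> rw [h] <;> norm_num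
  have hα0 : 0 ≤ α := by rw [hα]; positivity
  have hαsq : α ^ 2 = 2 / (9 + 2 * δ ^ 2) := by
    rw [hα]; exact Real.sq_sqrt (by positivity)
  have h90 : (9:ℝ) + 2 * δ ^ 2 ≠ 0 := by positivity
  have hα2' : 9 * φ ^ 2 * α ^ 2 = 2 := by
    rw [hαsq, hφ, div_pow, h9]; field_simp; ring
  have hψsq : ψ ^ 2 = 2 * δ ^ 2 / 9 := by rw [hψ, div_pow, mul_pow, h2]; ring
  have hφsq : φ ^ 2 = (2 * δ ^ 2 + 9) / 9 := by rw [hφ, div_pow, h9]; norm_num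
  have hαδ : α * δ = ψ / φ := by
    have ha : 0 ≤ α * δ * φ := mul_nonneg (mul_nonneg hα0 hδ) hφpos.le
    have h1 : (α * δ * φ) ^ 2 = ψ ^ 2 := by
      rw [mul_pow, mul_pow, hαsq, hψsq, hφsq]
      field_simp
      ring
    have h2' : α * δ * φ = ψ := by
      calc α * δ * φ = Real.sqrt ((α * δ * φ) ^ 2) := (Real.sqrt_sq ha).symm
        _ = Real.sqrt (ψ ^ 2) := by rw [h1]
        _ = ψ := Real.sqrt_sq hψ0
    rw [eq_div_iff hφpos.ne']
    exact h2'
  set c : ℝ := σ * ψ / φ with hcdef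
  set m : ℝ := φ - σ * ψ with hmdef
  set L : ℝ := -(σ * ψ * φ ^ 2 * (3 * φ ^ 2 + 4 * ψ ^ 2)) with hLdef
  have hcσ : σ * α * δ = c := by
    rw [hcdef, mul_assoc, hαδ, mul_div_assoc]
  have hc2 : c ^ 2 < 1 := by
    rw [hcdef, div_pow, mul_pow, hσ2, one_mul, div_lt_one (by positivity)]
    nlinarith
  have hc1 : -1 < c := by nlinarith [sq_nonneg c]
  have hm0 : 0 < m := by
    rcases hσ with h | h <;> rw [hmdef, h] <;> nlinarith
  have hDpos : ∀ s : ℝ, (0:ℝ) < Real.cosh s + c := fun s => by nlinarith [Real.one_le_cosh s]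
  have hk0 : (1:ℝ) - c ^ 2 ≠ 0 := by nlinarith
  -- the antiderivative
  set F : ℝ → ℝ := fun t => (4 / φ ^ 4) * (Real.sinh t *
        (-(1 - c ^ 2) ^ 4 / 5 + -(c * (1 - c ^ 2) ^ 3) / 20 * (Real.cosh t + c)
          + (1 / 15 + c ^ 2 / 20) * (1 - c ^ 2) ^ 2 * (Real.cosh t + c) ^ 2
          + (-(29 * c) / 120 - c ^ 3 / 20) * (1 - c ^ 2) * (Real.cosh t + c) ^ 3
          + (2 / 15 + 83 * c ^ 2 / 120 + c ^ 4 / 20) * (Real.cosh t + c) ^ 4)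
        / ((1 - c ^ 2) ^ 4 * (Real.cosh t + c) ^ 5))
      + L * Real.arctan (m * Real.sinh t / (Real.cosh t + 1)) with hFdef
  -- preliminary identity : (u t * v t)^2 in nice form
  have h9α : (3 * σ * α) ^ 2 * φ ^ 2 = 2 := by
    linear_combination (9 * α ^ 2 * φ ^ 2) * hσ2 + hα2'
  have hu2 : ∀ t : ℝ, (u t * v t) ^ 2
      = (4 / φ ^ 4) * (Real.sinh t ^ 2 / (Real.cosh t + c) ^ 6) := by
    intro t
    rw [hu, hv, hcσ]
    have hD := (hDpos t).ne'
    field_simp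
    linear_combination (Real.sinh t ^ 2 *
      ((3 * σ * α) ^ 2 * φ ^ 2 + 2)) * h9α
  have h1c : (1:ℝ) - (σ * ψ / φ) ^ 2 = 1 / φ ^ 2 := by
    field_simp
    linear_combination -(ψ ^ 2) * hσ2 + hφ2
  have hden2 : ∀ t : ℝ, (1 + m ^ 2) * Real.cosh t + (1 - m ^ 2)
      = 2 * m * φ * (Real.cosh t + c) := by
    intro t
    rw [hmdef, hcdef]
    field_simp
    linear_combination ((Real.cosh t + 1) * ψ ^ 2) * hσ2 - (Real.cosh t + 1) * hφ2
  -- derivative of F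
  have hFd : ∀ t : ℝ, HasDerivAt F ((u t * v t) ^ 2) t := by
    intro t
    have h := ((rat_hasDerivAt c hc2 t).const_mul (4 / φ ^ 4)).add
      ((arctan_hasDerivAt m t).const_mul L)
    refine h.congr_deriv ?_
    symm
    rw [hu2 t]
    have hD := (hDpos t).ne'
    have hid : φ * (Real.cosh t + c) = Real.cosh t * φ + σ * ψ := by
      rw [hcdef]; field_simp
    have hDφ0 : Real.cosh t * φ + σ * ψ ≠ 0 := by
      rw [← hid]; exact (mul_pos hφpos (hDpos t)).ne'
    have hmφ0 : φ - σ * ψ ≠ 0 := by rw [← hmdef]; exact hm0.ne'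
    have hcancel : (4 / φ ^ 4) * (c * (3 + 4 * c ^ 2) / (8 * (1 - c ^ 2) ^ 4 * (Real.cosh t + c)))
        + L * (m / ((1 + m ^ 2) * Real.cosh t + (1 - m ^ 2))) = 0 := by
      rw [hden2 t, hcdef, hmdef, hLdef, h1c]
      have hDφ0' : φ * Real.cosh t + σ * ψ ≠ 0 := by rw [mul_comm]; exact hDφ0
      field_simp
      linear_combination (32 * φ ^ 2 * σ * ψ ^ 3) * hσ2
    linear_combination (-1 : ℝ) * hcancel
  -- limits
  set ℓ : ℝ := (4 / φ ^ 4) * ((2 / 15 + 83 * c ^ 2 / 120 + c ^ 4 / 20) / (1 - c ^ 2) ^ 4)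
      + L * Real.arctan m with hldef
  have htop : Tendsto F atTop (nhds ℓ) :=
    ((rat_tendsto c hc2).const_mul (4 / φ ^ 4)).add ((arctan_tendsto m).const_mul L)
  have hodd : ∀ t : ℝ, F (-t) = -F t := by
    intro t
    rw [hFdef]
    simp only [Real.sinh_neg, Real.cosh_neg, neg_mul, neg_div, mul_neg, Real.arctan_neg]
    ring
  have hbot : Tendsto F atBot (nhds (-ℓ)) := by
    have h1 : Tendsto (fun t : ℝ => F (-t)) atBot (nhds ℓ) := htop.comp tendsto_neg_atBot_atTop
    have h2 := h1.neg
    exact h2.congr (fun t => by rw [hodd t, neg_neg])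
  -- integrability
  have hIoi : IntegrableOn (fun t : ℝ => (u t * v t) ^ 2) (Set.Ioi 0) :=
    integrableOn_Ioi_deriv_of_nonneg' (fun x _ => hFd x) (fun x _ => sq_nonneg _) htop
  have heven : ∀ x : ℝ, (u x * v x) ^ 2 = (u (-x) * v (-x)) ^ 2 := by
    intro x
    rw [hu, hv, hu, hv]
    simp only [Real.sinh_neg, Real.cosh_neg]
    ring
  have hint : Integrable (fun t : ℝ => (u t * v t) ^ 2) := by
    rw [← integrableOn_univ, ← Set.Iio_union_Ici (a := (0:ℝ)), integrableOn_union,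
      integrableOn_Ici_iff_integrableOn_Ioi]
    refine ⟨?_, hIoi⟩
    rw [← (Measure.measurePreserving_neg (volume : Measure ℝ)).integrableOn_comp_preimage
      (Homeomorph.neg ℝ).measurableEmbedding]
    rw [show (Neg.neg ⁻¹' Set.Iio (0:ℝ)) = Set.Ioi 0 by ext x; simp]
    simp only [Function.comp_def]
    exact hIoi.congr_fun (fun x _ => heven x) measurableSet_Ioi
  -- conclusion
  rw [integral_of_hasDerivAt_of_tendsto hFd hint hbot htop]
  have harct : Real.arctan (ψ - σ * φ) = -σ * Real.arctan m := by
    rcases hσ with h | h <;> rw [hmdef, h]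
    · rw [show ψ - 1 * φ = -(φ - 1 * ψ) by ring, Real.arctan_neg]; ring
    · rw [show ψ - (-1) * φ = φ - (-1) * ψ by ring]; ring
  rw [harct, hldef, hLdef, hcdef, h1c]
  field_simp
  linear_combination (43200 * ψ ^ 4 * (σ ^ 2 + 1) + 597600 * φ ^ 2 * ψ ^ 2) * hσ2 + (115200 * (φ ^ 2 + ψ ^ 2 + 1) + 597600 * ψ ^ 2) * hφ2
end

section
/- Let δ > 2, u₁* = (−δ + √(δ² − 4))/2, ν = −u₁* √(δ² − 4), κ = δ + 3u₁*, and α = (κ² + (9/2)ν)^{−1/2}. Then ν > 0, and for each sign σ ∈ {+1, −1} the curve u_σ(t) = 3σαν / (cosh(√ν t) + σ α κ), v_σ(t) = −3σαν√ν sinh(√ν t) / (cosh(√ν t) + σ α κ)² is defined for all t ∈ ℝ, satisfies the Hamiltonian system u̇ = v, v̇ = ν u − κ u² − u³ for all t, lies on the zero level set of H(u,v) = v²/2 − ν u²/2 + κ u³/3 + u⁴/4, and satisfies (u_σ(t), v_σ(t)) → (0,0) as t → ±∞. Thus Γ₁⁺ and Γ₁⁻ are a pair of homoclinic orbits to the saddle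 at the origin. -/
open Real Filter

set_option maxHeartbeats 1000000

lemma homoclinic_aux1 (σ α κ c C S : ℝ) (hS : S ^ 2 = C ^ 2 - 1)
    (hb : (σ * α) ^ 2 * (κ ^ 2 + 9 / 2 * c ^ 2) = 1) (hD0 : C + σ * α * κ ≠ 0) :
    c ^ 2 * (3 * σ * α * c ^ 2 / (C + σ * α * κ)) - κ * (3 * σ * α * c ^ 2 / (C + σ * α * κ)) ^ 2
      - (3 * σ * α * c ^ 2 / (C + σ * α * κ)) ^ 3
    = (-(3 * σ * α * c ^ 2 * c * (c * C)) * (C + σ * α * κ) ^ 2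
        - -(3 * σ * α * c ^ 2 * c * S) * (2 * (C + σ * α * κ) ^ 1 * (c * S)))
        / ((C + σ * α * κ) ^ 2) ^ 2 := by
  field_simp
  linear_combination (-2 * (σ * α) * c ^ 4) * hS +
    (-2 * (σ * α) * c ^ 4) * hb

lemma homoclinic_aux2 (σ α κ c C S : ℝ) (hS : S ^ 2 = C ^ 2 - 1)
    (hb : (σ * α) ^ 2 * (κ ^ 2 + 9 / 2 * c ^ 2) = 1) (hD0 : C + σ * α * κ ≠ 0) :
    (-(3 * σ * α * c ^ 2 * c * S) / (C + σ * α * κ) ^ 2) ^ 2 / 2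
      - c ^ 2 * (3 * σ * α * c ^ 2 / (C + σ * α * κ)) ^ 2 / 2
      + κ * (3 * σ * α * c ^ 2 / (C + σ * α * κ)) ^ 3 / 3
      + (3 * σ * α * c ^ 2 / (C + σ * α * κ)) ^ 4 / 4 = 0 := by
  field_simp
  linear_combination (36 * (σ * α) ^ 2 * c ^ 6) * hS +
    (36 * (σ * α) ^ 2 * c ^ 6) * hb

/-- The pair of explicit homoclinic orbits `Γ₁^±` to the saddle at the origin
of the Hamiltonian system `u̇ = v, v̇ = ν u − κ u² − u³` (μ = −1 case, after
translating `P₁` to the origin): for `δ > 2`, `u₁* = (−δ + √(δ²−4))/2`,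
`ν = −u₁* √(δ²−4)`, `κ = δ + 3u₁*`, and `α = (κ² + (9/2)ν)^{−1/2}`, one has
`ν > 0`, and for each sign `σ = ±1` the curve
`u_σ(t) = 3σαν/(cosh(√ν t) + σακ)`,
`v_σ(t) = −3σαν√ν sinh(√ν t)/(cosh(√ν t) + σακ)²`
is globally defined, solves the system, lies in the zero level set of the
Hamiltonian `H(u,v) = v²/2 − νu²/2 + κu³/3 + u⁴/4`, and converges to the
origin as `t → ±∞`. -/
theorem homoclinic_orbits_P1 (δ : ℝ) (hδ : 2 < δ)
    (u1 ν κ α : ℝ)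
    (hu1 : u1 = (-δ + Real.sqrt (δ ^ 2 - 4)) / 2)
    (hν : ν = -u1 * Real.sqrt (δ ^ 2 - 4))
    (hκ : κ = δ + 3 * u1)
    (hα : α = (Real.sqrt (κ ^ 2 + 9 / 2 * ν))⁻¹)
    (σ : ℝ) (hσ : σ = 1 ∨ σ = -1)
    (u v : ℝ → ℝ)
    (hu : ∀ t : ℝ, u t = 3 * σ * α * ν / (Real.cosh (Real.sqrt ν * t) + σ * α * κ))
    (hv : ∀ t : ℝ, v t = -(3 * σ * α * ν * Real.sqrt ν * Real.sinh (Real.sqrt ν * t))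
        / (Real.cosh (Real.sqrt ν * t) + σ * α * κ) ^ 2) :
    0 < ν ∧
    (∀ t : ℝ, Real.cosh (Real.sqrt ν * t) + σ * α * κ ≠ 0) ∧
    (∀ t : ℝ, HasDerivAt u (v t) t) ∧
    (∀ t : ℝ, HasDerivAt v (ν * u t - κ * (u t) ^ 2 - (u t) ^ 3) t) ∧
    (∀ t : ℝ, (v t) ^ 2 / 2 - ν * (u t) ^ 2 / 2 + κ * (u t) ^ 3 / 3 + (u t) ^ 4 / 4 = 0) ∧
    Tendsto (fun t => (u t, v t)) atTop (nhds (0, 0)) ∧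
    Tendsto (fun t => (u t, v t)) atBot (nhds (0, 0)) := by
  have hs4 : (0:ℝ) < δ ^ 2 - 4 := by nlinarith
  have hs0 : 0 < Real.sqrt (δ ^ 2 - 4) := Real.sqrt_pos.mpr hs4
  have hs2 : Real.sqrt (δ ^ 2 - 4) ^ 2 = δ ^ 2 - 4 := Real.sq_sqrt hs4.le
  have hsδ : Real.sqrt (δ ^ 2 - 4) < δ := by nlinarith
  have hν0 : 0 < ν := by rw [hν, hu1]; nlinarith
  have hX : 0 < κ ^ 2 + 9 / 2 * ν := by nlinarith [sq_nonneg κ]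
  have hα0 : 0 < α := by rw [hα]; exact inv_pos.mpr (Real.sqrt_pos.mpr hX)
  have hα2 : α ^ 2 * (κ ^ 2 + 9 / 2 * ν) = 1 := by
    rw [hα, inv_pow, Real.sq_sqrt hX.le]
    exact inv_mul_cancel₀ hX.ne'
  have hσ2 : σ ^ 2 = 1 := by rcases hσ with h | h <;> subst h <;> norm_num
  have hσabs : |σ| = 1 := by rcases hσ with h | h <;> subst h <;> norm_num
  set c := Real.sqrt ν with hcdef
  have hc0 : 0 < c := Real.sqrt_pos.mpr hν0
  have hc2 : c ^ 2 = ν := Real.sq_sqrt hν0.le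
  have hb : (σ * α) ^ 2 * (κ ^ 2 + 9 / 2 * c ^ 2) = 1 := by
    rw [hc2]
    linear_combination α ^ 2 * (κ ^ 2 + 9 / 2 * ν) * hσ2 + hα2
  set k := σ * α * κ with hkdef
  have hk2 : k ^ 2 < 1 := by
    have h1 : k ^ 2 = σ ^ 2 * (α ^ 2 * κ ^ 2) := by ring
    rw [h1, hσ2, one_mul]
    nlinarith [mul_pos (mul_pos hα0 hα0) hν0]
  have hkabs : |k| < 1 := by nlinarith [sq_abs k, abs_nonneg k]
  have hD : ∀ t : ℝ, 0 < Real.cosh (c * t) + k := by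
    intro t
    have h1 := Real.one_le_cosh (c * t)
    have h2 := neg_abs_le k
    linarith
  have hDne : ∀ t : ℝ, Real.cosh (c * t) + k ≠ 0 := fun t => (hD t).ne'
  have hDD : ∀ t : ℝ, HasDerivAt (fun t => Real.cosh (c * t) + k)
      (c * Real.sinh (c * t)) t := by
    intro t
    have h := ((Real.hasDerivAt_cosh (c * t)).comp t ((hasDerivAt_id t).const_mul c)).add_const k
    simpa [mul_comm] using h
  have hufun : u = fun t => 3 * σ * α * ν / (Real.cosh (c * t) + k) := funext hu
  have hvfun : v = fun t => -(3 * σ * α * ν * c * Real.sinh (c * t)) / (Real.cosh (c * t) + k) ^ 2 :=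
    funext hv
  have hm0 : 0 < 1 - |k| := by linarith
  -- lower bound for the denominator
  have hDge : ∀ t : ℝ, (1 - |k|) * Real.cosh (c * t) ≤ Real.cosh (c * t) + k := by
    intro t
    have h1 := Real.one_le_cosh (c * t)
    have h2 := neg_abs_le k
    nlinarith [mul_nonneg (abs_nonneg k) (sub_nonneg.mpr h1)]
  -- cosh tendsto
  have hcoshT : Tendsto (fun t : ℝ => Real.cosh (c * t)) atTop atTop := by
    apply tendsto_atTop_mono (fun t => ?_)
      ((Real.tendsto_exp_atTop.comp (tendsto_id.const_mul_atTop hc0)).atTop_div_const two_pos)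
    rw [Real.cosh_eq]
    have := Real.exp_pos (-(c * t))
    simp only [Function.comp, id_eq]
    linarith
  have hcoshB : Tendsto (fun t : ℝ => Real.cosh (c * t)) atBot atTop := by
    apply tendsto_atTop_mono (fun t => ?_)
      ((Real.tendsto_exp_atTop.comp (tendsto_neg_atBot_atTop.comp
        (tendsto_id.const_mul_atBot hc0))).atTop_div_const two_pos)
    rw [Real.cosh_eq]
    have := Real.exp_pos (c * t)
    simp only [Function.comp, id_eq]
    linarith
  have habsv : ∀ t : ℝ, ‖v t‖ ≤ (3 * α * ν * c / (1 - |k|) ^ 2) * (Real.cosh (c * t))⁻¹ := by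
    intro t
    have hC1 := Real.one_le_cosh (c * t)
    have hC0 : (0:ℝ) < Real.cosh (c * t) := Real.cosh_pos (c * t)
    have hSle : |Real.sinh (c * t)| ≤ Real.cosh (c * t) := by
      rw [Real.abs_sinh, ← Real.cosh_abs]
      exact (Real.sinh_lt_cosh _).le
    have habs : ‖v t‖ = 3 * α * ν * c * |Real.sinh (c * t)| / (Real.cosh (c * t) + k) ^ 2 := by
      rw [hv t, Real.norm_eq_abs, abs_div, abs_neg, abs_of_pos (pow_pos (hD t) 2)]
      congr 1
      rw [abs_mul, abs_mul, abs_mul, abs_mul, abs_mul, hσabs, abs_of_pos hα0, abs_of_pos hν0,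
        abs_of_pos hc0]
      norm_num
    rw [habs]
    calc 3 * α * ν * c * |Real.sinh (c * t)| / (Real.cosh (c * t) + k) ^ 2
        ≤ 3 * α * ν * c * Real.cosh (c * t) / ((1 - |k|) * Real.cosh (c * t)) ^ 2 := by
          refine div_le_div₀ (by positivity) ?_ (by positivity)
            (pow_le_pow_left₀ (by positivity) (hDge t) 2)
          exact mul_le_mul_of_nonneg_left hSle (by positivity)
      _ = (3 * α * ν * c / (1 - |k|) ^ 2) * (Real.cosh (c * t))⁻¹ := by
          field_simp
  have huT : ∀ l : Filter ℝ, Tendsto (fun t : ℝ => Real.cosh (c * t)) l atTop →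
      Tendsto u l (nhds 0) := by
    intro l hl
    rw [hufun]
    have hDT : Tendsto (fun t : ℝ => Real.cosh (c * t) + k) l atTop :=
      tendsto_atTop_add_const_right l k hl
    have := hDT.inv_tendsto_atTop.const_mul (3 * σ * α * ν)
    simpa [div_eq_mul_inv] using this
  have hvT : ∀ l : Filter ℝ, Tendsto (fun t : ℝ => Real.cosh (c * t)) l atTop →
      Tendsto v l (nhds 0) := by
    intro l hl
    apply squeeze_zero_norm habsv
    have := hl.inv_tendsto_atTop.const_mul (3 * α * ν * c / (1 - |k|) ^ 2)
    simpa using this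
  refine ⟨hν0, hDne, ?_, ?_, ?_, ?_, ?_⟩
  · -- u' = v
    intro t
    rw [hufun, hv]
    have h := (hasDerivAt_const t (3 * σ * α * ν)).div (hDD t) (hDne t)
    refine h.congr_deriv ?_
    ring
  · -- v' = ν u − κ u² − u³
    intro t
    rw [hvfun]
    have hden : HasDerivAt (fun t => (Real.cosh (c * t) + k) ^ 2)
        (2 * (Real.cosh (c * t) + k) ^ 1 * (c * Real.sinh (c * t))) t := (hDD t).pow 2
    have hnum : HasDerivAt (fun t => -(3 * σ * α * ν * c * Real.sinh (c * t)))
        (-(3 * σ * α * ν * c * (c * Real.cosh (c * t)))) t := by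
      have h := (((Real.hasDerivAt_sinh (c * t)).comp t
        ((hasDerivAt_id t).const_mul c)).const_mul (3 * σ * α * ν * c)).neg
      refine h.congr_deriv ?_
      ring
    have h := hnum.div hden (pow_ne_zero 2 (hDne t))
    refine h.congr_deriv ?_; symm
    rw [hu t]
    have hkey := homoclinic_aux1 σ α κ c (Real.cosh (c * t)) (Real.sinh (c * t))
      (Real.sinh_sq (c * t)) hb (hDne t)
    rw [hc2] at hkey
    linear_combination hkey
  · -- Hamiltonian
    intro t
    rw [hu t, hv t]
    have hkey := homoclinic_aux2 σ α κ c (Real.cosh (c * t)) (Real.sinh (c * t))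
      (Real.sinh_sq (c * t)) hb (hDne t)
    rw [hc2] at hkey
    linear_combination hkey
  · exact (huT atTop hcoshT).prodMk_nhds (hvT atTop hcoshT)
  · exact (huT atBot hcoshB).prodMk_nhds (hvT atBot hcoshB)
end

section
/- For any x* ∈ ℝ, the Jacobian matrix of the Maasch–Saltzman system ẋ = −x − y, ẏ = r y − p z + s z² − y z², ż = −q x − q z evaluated at the point P = (x*, −x*, −x*) has characteristic polynomial λ³ + b λ² + c λ + d, where b = 1 + q − r + (x*)², c = q − (1 + q) r + (1 + q)(x*)², and d = q [ p − r + 2 s x* + 3 (x*)² ]. -/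
open Matrix Polynomial

/-- The characteristic polynomial of the Jacobian of the Maasch–Saltzman
system `ẋ = −x − y, ẏ = r y − p z + s z² − y z², ż = −q x − q z` at any point
`P = (x*, −x*, −x*)` is `λ³ + b λ² + c λ + d` with `b = 1 + q − r + (x*)²`,
`c = q − (1+q) r + (1+q)(x*)²`, `d = q(p − r + 2 s x* + 3 (x*)²)`. -/
theorem MS_charpoly (p q r s xstar : ℝ)
    (F : (Fin 3 → ℝ) → (Fin 3 → ℝ))
    (hF : ∀ v : Fin 3 → ℝ,
      F v = ![-(v 0) - v 1,
              r * v 1 - p * v 2 + s * (v 2) ^ 2 - v 1 * (v 2) ^ 2,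
              -(q * v 0) - q * v 2])
    (J : Matrix (Fin 3) (Fin 3) ℝ)
    (hJ : J = !![-1, -1, 0;
                 0, r - xstar ^ 2, -p - 2 * s * xstar - 2 * xstar ^ 2;
                 -q, 0, -q]) :
    (∀ v : Fin 3 → ℝ, fderiv ℝ F ![xstar, -xstar, -xstar] v = J.mulVec v) ∧
    J.charpoly
      = X ^ 3 + C (1 + q - r + xstar ^ 2) * X ^ 2
        + C (q - (1 + q) * r + (1 + q) * xstar ^ 2) * X
        + C (q * (p - r + 2 * s * xstar + 3 * xstar ^ 2)) := by
  constructor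
  · set a : Fin 3 → ℝ := ![xstar, -xstar, -xstar] with ha
    set L : (Fin 3 → ℝ) →L[ℝ] (Fin 3 → ℝ) :=
      LinearMap.toContinuousLinearMap J.mulVecLin with hL
    have h0 := hasFDerivAt_apply (𝕜 := ℝ) (0 : Fin 3) a
    have h1 := hasFDerivAt_apply (𝕜 := ℝ) (1 : Fin 3) a
    have h2 := hasFDerivAt_apply (𝕜 := ℝ) (2 : Fin 3) a
    have hFa : HasFDerivAt F L a := by
      have hFe : F = fun v => ![-(v 0) - v 1,
              r * v 1 - p * v 2 + s * (v 2) ^ 2 - v 1 * (v 2) ^ 2,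
              -(q * v 0) - q * v 2] := funext hF
      rw [hFe, hasFDerivAt_pi']
      intro i
      fin_cases i
      · simp only [Matrix.cons_val_zero]
        refine (h0.neg.sub h1).congr_fderiv ?_
        ext w
        simp [hL, hJ, Matrix.mulVec, dotProduct, Fin.sum_univ_three, ha,
          Matrix.mulVecLin_apply]
        ring
      · simp only [Matrix.cons_val_one, Matrix.head_cons, pow_two]
        refine ((((h1.const_mul r).sub (h2.const_mul p)).add
          ((h2.mul h2).const_mul s)).sub (h1.mul (h2.mul h2))).congr_fderiv ?_
        ext w
        simp [hL, hJ, Matrix.mulVec, dotProduct, Fin.sum_univ_three, ha,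
          Matrix.mulVecLin_apply]
        ring
      · simp only [Matrix.cons_val_two, Matrix.tail_cons, Matrix.head_cons]
        refine ((h0.const_mul q).neg.sub (h2.const_mul q)).congr_fderiv ?_
        ext w
        simp [hL, hJ, Matrix.mulVec, dotProduct, Fin.sum_univ_three, ha,
          Matrix.mulVecLin_apply]
        ring
    intro v
    rw [hFa.fderiv]
    simp [hL]
  · subst hJ
    rw [Matrix.charpoly, Matrix.det_fin_three]
    simp [Matrix.charmatrix_apply, Matrix.diagonal, Matrix.one_apply, map_add,
      map_sub, _root_.map_mul, map_neg, map_pow, map_ofNat]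
    ring
end

section
/- Let q > 0 and q/(1+q) < p < 1 + q, and define f₀(p) = (1+q)/2 − √((q−1)²/4 + q p/(1+q)). Then r := f₀(p) satisfies 0 < r < q/(1+q) and solves the equation (1 + q − r)(q − (1+q) r) = q (p − r) (i.e., e₀ = b₀ c₀ − d₀ = 0), so (p, f₀(p)) lies on the lower branch of the Hopf-bifurcation parabola e₀ of P₀. Moreover f₀ is strictly decreasing on the interval (q/(1+q), 1+q). -/
/-- The lower branch `f₀` of the Hopf-bifurcation parabola `e₀` of `P₀` for
the Maasch–Saltzman system: for `q > 0` and `q/(1+q) < p < 1 + q`, the value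
`r = f₀(p) = (1+q)/2 − √((q−1)²/4 + q p/(1+q))` satisfies `0 < r < q/(1+q)`
and solves `(1 + q − r)(q − (1+q) r) = q(p − r)`; moreover `f₀` is strictly
decreasing on `(q/(1+q), 1+q)`. -/
theorem hopf_curve_lower_branch (q : ℝ) (hq : 0 < q)
    (f0 : ℝ → ℝ)
    (hf0 : ∀ p : ℝ, f0 p
      = (1 + q) / 2 - Real.sqrt ((q - 1) ^ 2 / 4 + q * p / (1 + q)))
    (p : ℝ) (hp1 : q / (1 + q) < p) (hp2 : p < 1 + q) :
    0 < f0 p ∧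
    f0 p < q / (1 + q) ∧
    (1 + q - f0 p) * (q - (1 + q) * f0 p) = q * (p - f0 p) ∧
    StrictAntiOn f0 (Set.Ioo (q / (1 + q)) (1 + q)) := by
  have hq1 : (0:ℝ) < 1 + q := by linarith
  have hp0 : 0 < p := lt_trans (by positivity) hp1
  have hA : 0 ≤ (q - 1) ^ 2 / 4 + q * p / (1 + q) := by positivity
  set s := Real.sqrt ((q - 1) ^ 2 / 4 + q * p / (1 + q)) with hs
  have hs0 : 0 ≤ s := Real.sqrt_nonneg _
  have hs2 : s ^ 2 = (q - 1) ^ 2 / 4 + q * p / (1 + q) := Real.sq_sqrt hA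
  have hub : q * p / (1 + q) < q := by
    rw [div_lt_iff₀ hq1]
    nlinarith
  refine ⟨?_, ?_, ?_, ?_⟩
  · rw [hf0 p]
    have h1 : s ^ 2 < ((1 + q) / 2) ^ 2 := by
      rw [hs2]; nlinarith
    nlinarith
  · rw [hf0 p]
    have ht : q ^ 2 / (1 + q) ^ 2 < q * p / (1 + q) := by
      rw [div_lt_div_iff₀ (by positivity) hq1]
      have := (div_lt_iff₀ hq1).mp hp1
      nlinarith
    have heq : ((1 + q ^ 2) / (2 * (1 + q))) ^ 2
        = (q - 1) ^ 2 / 4 + q ^ 2 / (1 + q) ^ 2 := by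
      field_simp
      ring
    have h2 : ((1 + q ^ 2) / (2 * (1 + q))) ^ 2 < s ^ 2 := by
      rw [hs2, heq]; linarith
    have h3 : (1 + q ^ 2) / (2 * (1 + q)) < s := by
      nlinarith [sq_nonneg ((1 + q ^ 2) / (2 * (1 + q)) + s),
        div_pos (by positivity : (0:ℝ) < 1 + q ^ 2)
          (by positivity : (0:ℝ) < 2 * (1 + q))]
    have heq2 : (1 + q) / 2 - q / (1 + q) = (1 + q ^ 2) / (2 * (1 + q)) := by
      field_simp
      ring
    linarith
  · rw [hf0 p]
    have hs2' := hs2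
    field_simp at hs2'
    linear_combination hs2' / 4
  · intro a ha b hb hab
    rw [hf0 a, hf0 b]
    have ha0 : 0 < a := lt_trans (by positivity) ha.1
    have hAa : 0 ≤ (q - 1) ^ 2 / 4 + q * a / (1 + q) := by positivity
    have hlt : Real.sqrt ((q - 1) ^ 2 / 4 + q * a / (1 + q))
        < Real.sqrt ((q - 1) ^ 2 / 4 + q * b / (1 + q)) := by
      apply Real.sqrt_lt_sqrt hAa
      have : q * a / (1 + q) < q * b / (1 + q) := by gcongr
      linarith
    linarith
end

section
/- Let q > 0 and set p = r = q/(1+q). Then the Jacobian A of the Maasch–Saltzman system at P₀ = (0,0,0), namely A = [[−1, −1, 0], [0, q/(1+q), −q/(1+q)], [−q, 0, −q]], has characteristic polynomial λ² (λ + 1 + q − q/(1+q)); thus its eigenvalues are 0 with algebraic multiplicity two and λ₃ = −(1 + q − q/(1+q)) < 0. Moreover A has rank two, so the kernel of A is one-dimensional and the zero eigenvalue has geometric multiplicity one. Hence Q₀ = (q/(1+q), q/(1+q)) is a Bogdanov–Takens point of P₀ for the full three-dimensional model. -/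
open Matrix Polynomial

/-- Bogdanov–Takens point `Q₀ = (q/(1+q), q/(1+q))` of the equilibrium `P₀`
of the full three-dimensional Maasch–Saltzman system: for `p = r = q/(1+q)`
the Jacobian `A = [[−1,−1,0],[0,q/(1+q),−q/(1+q)],[−q,0,−q]]` at `P₀` has
characteristic polynomial `λ²(λ + 1 + q − q/(1+q))`, i.e. a double zero
eigenvalue together with the negative eigenvalue `λ₃ = −(1 + q − q/(1+q))`;
moreover `A` has rank two, so the zero eigenvalue has geometric multiplicity
one. -/
theorem BT_point_Q0_full_system (q : ℝ) (hq : 0 < q)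
    (A : Matrix (Fin 3) (Fin 3) ℝ)
    (hA : A = !![-1, -1, 0;
                 0, q / (1 + q), -(q / (1 + q));
                 -q, 0, -q]) :
    A.charpoly = X ^ 2 * (X + C (1 + q - q / (1 + q))) ∧
    -(1 + q - q / (1 + q)) < 0 ∧
    A.rank = 2 ∧
    Module.finrank ℝ (LinearMap.ker A.mulVecLin) = 1 := by
  have hq1 : (1 : ℝ) + q ≠ 0 := by positivity
  have ha : q / (1 + q) * (1 + q) = q := by field_simp
  have hapos : 0 < 1 + q - q / (1 + q) := by
    rw [sub_pos, div_lt_iff₀ (by positivity)]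
    nlinarith
  -- kernel
  have hker : LinearMap.ker A.mulVecLin = Submodule.span ℝ {![(-1 : ℝ), 1, 1]} := by
    ext x
    simp only [LinearMap.mem_ker, Submodule.mem_span_singleton]
    constructor
    · intro hx
      have h0 := congrFun hx 0
      have h1 := congrFun hx 1
      have h2 := congrFun hx 2
      simp [hA, mulVecLin_apply, mulVec, dotProduct, Fin.sum_univ_three] at h0 h1 h2
      refine ⟨x 1, ?_⟩
      have hne : q / (1 + q) ≠ 0 := by positivity
      have h1' : q / (1 + q) * (x 1 - x 2) = 0 := by linear_combination h1
      have hx2 : x 2 = x 1 := by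
        rcases mul_eq_zero.mp h1' with h | h
        · exact absurd h hne
        · linarith
      have hx0 : x 0 = -(x 1) := by
        have h2' : q * (x 0 + x 2) = 0 := by linear_combination -h2
        rcases mul_eq_zero.mp h2' with h | h
        · exact absurd h hq.ne'
        · linarith
      funext i
      fin_cases i <;> simp [hx0, hx2]
    · rintro ⟨c, rfl⟩
      simp only [LinearMap.map_smul]
      have : A.mulVecLin ![(-1 : ℝ), 1, 1] = 0 := by
        funext i
        fin_cases i <;>
          simp [hA, mulVecLin_apply, mulVec, dotProduct, Fin.sum_univ_three]
      rw [this, smul_zero]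
  have hfin : Module.finrank ℝ (LinearMap.ker A.mulVecLin) = 1 := by
    rw [hker, finrank_span_singleton]
    intro h
    have := congrFun h 1
    simp at this
  refine ⟨?_, by linarith, ?_, hfin⟩
  · have hC : (C (q * (1 + q)⁻¹) * (1 + C q) : ℝ[X]) = C q := by
      rw [mul_add, mul_one, ← C_mul, ← C_add]
      congr 1
      field_simp
    rw [Matrix.charpoly, hA, Matrix.det_fin_three]
    simp [charmatrix_apply_eq, charmatrix_apply_ne, Matrix.charmatrix, C_sub, C_add, C_neg,
      div_eq_mul_inv]
    have hC2 : (C q * C ((1 + q)⁻¹) : ℝ[X]) = C (q * (1 + q)⁻¹) := by rw [← C_mul]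
    linear_combination (-(X : ℝ[X])) * hC - ((X : ℝ[X]) + X * C q) * hC2
  · have := A.mulVecLin.finrank_range_add_finrank_ker
    rw [hfin] at this
    simp [Module.finrank_pi] at this
    rw [Matrix.rank]
    omega
end
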